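/- For rationals a, b, c, h, k and points P=(x1,y1), Q=(x2,y2) with D := det[x2,y2]_q ≠ 0, the inverse of [x2,y2]_q equals (1/D)·adj([x2,y2]_q), and the product [x1,y1]_q·adj([x2,y2]_q) commutes with [x3,y3]_q·adj([x4,y4]_q) for any further points: (A·adj(B))·(C·adj(D')) = (C·adj(D'))·(A·adj(B)) for all A, B, C, D' ∈ A(q). -/
import Mathlib


/-- The matrix `[x,y]_q`. -/
def Mq (a b c h k x y : ℚ) : Matrix (Fin 2) (Fin 2) ℚ :=
  !![x - h, -c * (y - k); y - k, a * (x - h) + b * (y - k)]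

/-- If `det [x₂,y₂]_q ≠ 0` then `([x₂,y₂]_q)⁻¹ = (1/det)·adj([x₂,y₂]_q)`, and all
products `A·adj(B)` with `A, B ∈ A(q)` commute with one another. -/
theorem Mq_inv_and_products_commute (a b c h k : ℚ) :
    (∀ x2 y2 : ℚ, (Mq a b c h k x2 y2).det ≠ 0 →
      (Mq a b c h k x2 y2)⁻¹ =
        ((Mq a b c h k x2 y2).det)⁻¹ • (Mq a b c h k x2 y2).adjugate) ∧
    (∀ x1 y1 x2 y2 x3 y3 x4 y4 : ℚ,
      (Mq a b c h k x1 y1 * (Mq a b c h k x2 y2).adjugate)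
          * (Mq a b c h k x3 y3 * (Mq a b c h k x4 y4).adjugate) =
        (Mq a b c h k x3 y3 * (Mq a b c h k x4 y4).adjugate)
          * (Mq a b c h k x1 y1 * (Mq a b c h k x2 y2).adjugate)) := by
  constructor
  · intro x2 y2 hd
    rw [Matrix.inv_def, Ring.inverse_eq_inv']
  · intro x1 y1 x2 y2 x3 y3 x4 y4
    ext i j
    fin_cases i <;> fin_cases j <;>
      simp [Mq, Matrix.adjugate_fin_two, Matrix.mul_apply, Fin.sum_univ_two] <;> ring
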